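/- Suppose α₀ > α₁ ≥ 1, β₀ > β₁ ≥ 1 are integers with α₁β₀ − β₁α₀ = σ where σ = ±1. Then for any integer u with 0 ≤ u < β₁, the sum over j from 0 to u of {α₀ j / β₀} equals (the sum over j from 0 to u of {α₁ j / β₁}) minus σ·(u+1)u/(2β₀β₁). -/

import Mathlib

lemma key_6 (α₀ α₁ β₀ β₁ : ℤ) (hβ₁ : 1 ≤ β₁) (hβ : β₁ < β₀)
    (σ : ℤ) (hσ : σ = 1 ∨ σ = -1)
    (h : α₁ * β₀ - β₁ * α₀ = σ)
    (j : ℤ) (hj0 : 0 ≤ j) (hj : j < β₁) :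
    β₁ * (α₀ * j % β₀) = β₀ * (α₁ * j % β₁) - σ * j := by
  have hβ₀ : (0:ℤ) < β₀ := by linarith
  have hβ₁' : (0:ℤ) < β₁ := hβ₁
  set r : ℤ := α₁ * j % β₁ with hr
  set q : ℤ := α₁ * j / β₁ with hq
  have hr0 : 0 ≤ r := Int.emod_nonneg _ (by linarith)
  have hr1 : r < β₁ := Int.emod_lt_of_pos _ hβ₁'
  have hdecomp : β₁ * q + r = α₁ * j := by
    rw [hq, hr]; exact Int.mul_ediv_add_emod (α₁ * j) β₁
  -- bounds on t := β₀ * r - σ * j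
  have hcop : IsCoprime α₁ β₁ := by
    rcases hσ with h1 | h1
    · exact ⟨β₀, -α₀, by linarith [h, h1]⟩
    · exact ⟨-β₀, α₀, by linarith [h, h1]⟩
  have hlow : 0 ≤ β₀ * r - σ * j := by
    rcases hσ with h1 | h1
    · subst h1
      rcases eq_or_lt_of_le hj0 with hj0' | hj0'
      · simp [← hj0']; positivity
      · have hrpos : 1 ≤ r := by
          rcases lt_or_ge 0 r with h2 | h2
          · exact h2
          · exfalso
            have : r = 0 := le_antisymm h2 hr0
            have hdvd : β₁ ∣ α₁ * j := Int.dvd_of_emod_eq_zero this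
            have : β₁ ∣ j := (hcop.symm.dvd_of_dvd_mul_left hdvd)
            have := Int.le_of_dvd hj0' this
            omega
        nlinarith
    · subst h1; nlinarith
  have hhigh : β₀ * r - σ * j < β₀ * β₁ := by
    rcases hσ with h1 | h1 <;> subst h1 <;> nlinarith
  have hval : β₁ * (α₀ * j) = β₁ * β₀ * q + (β₀ * r - σ * j) := by
    have : β₁ * α₀ = α₁ * β₀ - σ := by linarith
    calc β₁ * (α₀ * j) = (β₁ * α₀) * j := by ring
    _ = (α₁ * β₀ - σ) * j := by rw [this]
    _ = β₀ * (α₁ * j) - σ * j := by ring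
    _ = β₀ * (β₁ * q + r) - σ * j := by rw [hdecomp]
    _ = β₁ * β₀ * q + (β₀ * r - σ * j) := by ring
  have hmod : β₁ * (α₀ * j) % (β₁ * β₀) = β₀ * r - σ * j := by
    rw [hval]
    rw [add_comm, Int.add_mul_emod_self_left]
    exact Int.emod_eq_of_lt hlow (by linarith [hhigh])
  rw [← Int.mul_emod_mul_of_pos _ _ hβ₁', hmod]

theorem stmt_6 (α₀ α₁ β₀ β₁ : ℕ) (hα₁ : 1 ≤ α₁) (hβ₁ : 1 ≤ β₁)
    (hα : α₁ < α₀) (hβ : β₁ < β₀) (σ : ℤ) (hσ : σ = 1 ∨ σ = -1)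
    (h : (α₁ : ℤ) * β₀ - (β₁ : ℤ) * α₀ = σ)
    (u : ℕ) (hu : u < β₁) :
    ∑ j ∈ Finset.range (u + 1), Int.fract ((α₀ * j : ℚ) / β₀) =
      (∑ j ∈ Finset.range (u + 1), Int.fract ((α₁ * j : ℚ) / β₁)) -
        (σ : ℚ) * ((u + 1) * u) / (2 * β₀ * β₁) := by
  have hβ₀pos : 0 < β₀ := by omega
  have hβ₀Q : (β₀ : ℚ) ≠ 0 := by positivity
  have hβ₁Q : (β₁ : ℚ) ≠ 0 := by positivity
  have hterm : ∀ j ∈ Finset.range (u + 1),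
      Int.fract ((α₀ * j : ℚ) / β₀) =
        Int.fract ((α₁ * j : ℚ) / β₁) - (σ : ℚ) * j / (β₀ * β₁) := by
    intro j hj
    simp only [Finset.mem_range] at hj
    have hj' : j < β₁ := by omega
    have hk := key_6 (α₀ : ℤ) (α₁ : ℤ) (β₀ : ℤ) (β₁ : ℤ)
      (by exact_mod_cast hβ₁) (by exact_mod_cast hβ) σ hσ h (j : ℤ)
      (by positivity) (by exact_mod_cast hj')
    have e0 : ((α₀ : ℚ) * j) = ((α₀ * j : ℕ) : ℚ) := by push_cast; ring
    have e1 : ((α₁ : ℚ) * j) = ((α₁ * j : ℕ) : ℚ) := by push_cast; ring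
    rw [e0, e1, Int.fract_div_natCast_eq_div_natCast_mod,
      Int.fract_div_natCast_eq_div_natCast_mod]
    have c0 : ((α₀ * j % β₀ : ℕ) : ℚ) = (((α₀ : ℤ) * (j : ℤ) % (β₀ : ℤ) : ℤ) : ℚ) := by
      norm_cast
    have c1 : ((α₁ * j % β₁ : ℕ) : ℚ) = (((α₁ : ℤ) * (j : ℤ) % (β₁ : ℤ) : ℤ) : ℚ) := by
      norm_cast
    have h3 := congrArg (fun x : ℤ => (x : ℚ)) hk
    simp only [Int.cast_sub, Int.cast_mul, Int.cast_natCast] at h3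
    rw [c0, c1]
    field_simp
    linear_combination h3
  rw [Finset.sum_congr rfl hterm]
  rw [Finset.sum_sub_distrib]
  have hgauss : ∑ j ∈ Finset.range (u + 1), (σ : ℚ) * j / (β₀ * β₁)
      = (σ : ℚ) * ((u + 1) * u) / (2 * β₀ * β₁) := by
    have h2 : (∑ i ∈ Finset.range (u + 1), (i : ℚ)) * 2 = (u + 1) * u := by
      have hn : ((∑ i ∈ Finset.range (u + 1), i) * 2 : ℕ) = ((u + 1) * u : ℕ) := by
        rw [Finset.sum_range_id_mul_two, Nat.add_sub_cancel]
      have hq : (((∑ i ∈ Finset.range (u + 1), i : ℕ)) : ℚ) * 2 = ((u + 1) * u : ℕ) := by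
        exact_mod_cast hn
      rw [Nat.cast_sum] at hq
      push_cast at hq
      convert hq using 2
    rw [show (∑ j ∈ Finset.range (u + 1), (σ : ℚ) * j / (β₀ * β₁))
        = (σ : ℚ) / (β₀ * β₁) * ∑ j ∈ Finset.range (u + 1), (j : ℚ) by
      rw [Finset.mul_sum]; apply Finset.sum_congr rfl; intro j _; ring]
    field_simp
    linear_combination (σ : ℚ) * h2
  rw [hgauss]
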